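/- Let (Σ,σ) be a primitive Markov subshift on a countable alphabet. Suppose the uniformly continuous potential A : Σ → ℝ is bounded above and verifies inf A|_{⋃_{i∈F}[i]} > −∞. Then β_A = inf_{f ∈ C⁰(Σ)} sup_{x∈Σ} (A + f − f∘σ)(x), where the infimum is over all continuous real-valued functions f on Σ. -/

import Mathlib

open MeasureTheory Filter Topology Set

/-- Membership in the Markov shift: admissible transitions at every coordinate. -/
def InShift (M : ℕ → ℕ → Bool) (x : ℕ → ℕ) : Prop := ∀ j, M (x j) (x (j+1)) = true

/-- The one-sided countable Markov shift `Σ` associated to the transition matrix `M`,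
as a subtype of `ℕ → ℕ` (with the product topology, which is the topology induced by
the metric `d(x,y) = λ^{min{j : x_j ≠ y_j}}`). -/
abbrev ShiftSpace (M : ℕ → ℕ → Bool) := {x : ℕ → ℕ // InShift M x}

/-- The left shift map `σ`. -/
def shiftMap (M : ℕ → ℕ → Bool) (x : ShiftSpace M) : ShiftSpace M :=
  ⟨fun j => x.1 (j+1), fun j => x.2 (j+1)⟩

/-- `Agree M k x y` means the points `x, y` coincide on the first `k` coordinates;
for `k ≥ 1` this is exactly `d(x,y) ≤ λ^k` for the metric of the paper. -/
def Agree (M : ℕ → ℕ → Bool) (k : ℕ) (x y : ShiftSpace M) : Prop :=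
  ∀ j < k, x.1 j = y.1 j

/-- The sets `B_n` of symbols admitting admissible words of length `n+1` starting at them. -/
def BSet (M : ℕ → ℕ → Bool) : ℕ → Set ℕ
  | 0 => {i | ∃ j, M i j = true}
  | n+1 => {i | ∃ j ∈ BSet M n, M i j = true}

/-- `⋂_{n ≥ 0} B_n`. -/
def BInf (M : ℕ → ℕ → Bool) : Set ℕ := ⋂ n, BSet M n

/-- `M` is primitive with connecting set `F` and connection length `K₀`: any two symbols
of `⋂ B_n` can be joined by an admissible word of length `K₀` with all letters in `F`. -/
def Primitive (M : ℕ → ℕ → Bool) (F : Set ℕ) (K₀ : ℕ) : Prop :=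
  ∀ i ∈ BInf M, ∀ j ∈ BInf M, ∃ p : ℕ → ℕ,
    p 0 = i ∧ p (K₀ + 1) = j ∧ (∀ t, 1 ≤ t → t ≤ K₀ → p t ∈ F) ∧
    (∀ t ≤ K₀, M (p t) (p (t+1)) = true)

/-- `A` is locally Hölder continuous with constant `H`:
`Var_k(A) ≤ H ⬝ λ^k` for every `k ≥ 1`. -/
def LocHolder (M : ℕ → ℕ → Bool) (lam H : ℝ) (A : ShiftSpace M → ℝ) : Prop :=
  ∀ k : ℕ, 1 ≤ k → ∀ x y : ShiftSpace M, Agree M k x y → A x - A y ≤ H * lam ^ k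

/-- `A` is coercive: `sup A|_{[i]} → -∞` as `i → ∞`. -/
def Coercive (M : ℕ → ℕ → Bool) (A : ShiftSpace M → ℝ) : Prop :=
  ∀ C : ℝ, ∃ N : ℕ, ∀ i : ℕ, N ≤ i → ∀ x : ShiftSpace M, x.1 0 = i → A x ≤ C

/-- The union of cylinders `⋃_{i ∈ F} [i]`. -/
def FCyl (M : ℕ → ℕ → Bool) (F : Set ℕ) : Set (ShiftSpace M) := {x | x.1 0 ∈ F}

/-- `μ` is a `σ`-invariant Borel probability measure. -/
def InvProb (M : ℕ → ℕ → Bool) (μ : Measure (ShiftSpace M)) : Prop :=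
  IsProbabilityMeasure μ ∧ μ.map (shiftMap M) = μ

/-- The ergodic maximizing value `β_A = sup {∫ A dμ : μ ∈ M_σ}`. -/
noncomputable def betaA (M : ℕ → ℕ → Bool) (A : ShiftSpace M → ℝ) : ℝ :=
  sSup {r | ∃ μ : Measure (ShiftSpace M), InvProb M μ ∧ Integrable A μ ∧ ∫ x, A x ∂μ = r}

/-- The compact subshift `Σ_I` on the finite alphabet `{0, …, I}`. -/
def SpaceI (M : ℕ → ℕ → Bool) (I : ℕ) : Set (ShiftSpace M) := {x | ∀ j, x.1 j ≤ I}

/-- `β_A(I) = max {∫ A dμ : μ ∈ M_σ, supp μ ⊆ Σ_I}`. -/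
noncomputable def betaAI (M : ℕ → ℕ → Bool) (A : ShiftSpace M → ℝ) (I : ℕ) : ℝ :=
  sSup {r | ∃ μ : Measure (ShiftSpace M), InvProb M μ ∧ μ (SpaceI M I) = 1 ∧
    Integrable A μ ∧ ∫ x, A x ∂μ = r}

/-- Birkhoff sum `S_k A`. -/
noncomputable def birkhoff (M : ℕ → ℕ → Bool) (A : ShiftSpace M → ℝ) (k : ℕ)
    (x : ShiftSpace M) : ℝ :=
  ∑ j ∈ Finset.range k, A ((shiftMap M)^[j] x)

/-- The `k`-th variation `Var_k(A)`. -/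
noncomputable def VarK (M : ℕ → ℕ → Bool) (A : ShiftSpace M → ℝ) (k : ℕ) : ℝ :=
  sSup {r | ∃ x y : ShiftSpace M, Agree M k x y ∧ A x - A y = r}

/-- `Var(A) = ∑_{k ≥ 1} Var_k(A)`. -/
noncomputable def VarSum (M : ℕ → ℕ → Bool) (A : ShiftSpace M → ℝ) : ℝ :=
  ∑' k : ℕ, VarK M A (k + 1)

/-- `sup A`. -/
noncomputable def supA (M : ℕ → ℕ → Bool) (A : ShiftSpace M → ℝ) : ℝ :=
  sSup (Set.range A)

/-- `inf A|_{⋃_{i ∈ F} [i]}`. -/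
noncomputable def infF (M : ℕ → ℕ → Bool) (F : Set ℕ) (A : ShiftSpace M → ℝ) : ℝ :=
  sInf (A '' FCyl M F)

/-- The defining set for `u_A(x)`: all values `S_k(A - β_A)(y)` with `σ^k(y) = x`. -/
noncomputable def uASet (M : ℕ → ℕ → Bool) (A : ShiftSpace M → ℝ) (x : ShiftSpace M) :
    Set ℝ :=
  {r | ∃ (k : ℕ) (y : ShiftSpace M), (shiftMap M)^[k] y = x ∧
    birkhoff M A k y - k * betaA M A = r}

/-- The candidate minimal sub-action
`u_A(x) = sup {S_k(A - β_A)(y) : k ≥ 0, σ^k(y) = x}`. -/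
noncomputable def uA (M : ℕ → ℕ → Bool) (A : ShiftSpace M → ℝ) (x : ShiftSpace M) : ℝ :=
  sSup (uASet M A x)

/-- The non-wandering set `Ω(A, I)` with respect to `A|_{Σ_I}`. -/
def NonWandering (M : ℕ → ℕ → Bool) (A : ShiftSpace M → ℝ) (I : ℕ) :
    Set (ShiftSpace M) :=
  {x | x ∈ SpaceI M I ∧ ∀ ε : ℝ, 0 < ε → ∀ m : ℕ,
    ∃ y ∈ SpaceI M I, ∃ n : ℕ, 1 ≤ n ∧ Agree M m x y ∧
      Agree M m x ((shiftMap M)^[n] y) ∧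
      |birkhoff M A n y - n * betaAI M A I| < ε}

namespace BetaDualAux

variable {M : ℕ → ℕ → Bool}

instance instBorelShift (M : ℕ → ℕ → Bool) : BorelSpace (ShiftSpace M) :=
  Subtype.borelSpace {x | InShift M x}

lemma shift_iter_coe (t : ℕ) (x : ShiftSpace M) (j : ℕ) :
    ((shiftMap M)^[t] x).1 j = x.1 (j + t) := by
  induction t generalizing j x with
  | zero => rfl
  | succ t ih =>
    rw [Function.iterate_succ_apply, ih]
    show x.1 (j + t + 1) = x.1 (j + (t + 1))
    congr 1

lemma measurable_shiftMap : Measurable (shiftMap M) := by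
  apply Measurable.subtype_mk
  exact measurable_pi_iff.2 fun j => (measurable_pi_apply (j+1)).comp measurable_subtype_coe

lemma agree_refl (k : ℕ) (x : ShiftSpace M) : Agree M k x x := fun _ _ => rfl

lemma isOpen_agreeCyl (n : ℕ) (x : ShiftSpace M) :
    IsOpen {y : ShiftSpace M | Agree M n x y} := by
  have h : {y : ShiftSpace M | Agree M n x y} =
      ⋂ j ∈ Finset.range n, ((fun y : ShiftSpace M => y.1 j) ⁻¹' {x.1 j}) := by
    ext y
    simp only [Set.mem_setOf_eq, Set.mem_iInter, Set.mem_preimage, Set.mem_singleton_iff,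
      Finset.mem_range, Agree]
    exact ⟨fun h j hj => (h j hj).symm, fun h j hj => (h j hj).symm⟩
  rw [h]
  exact isOpen_biInter_finset fun j _ =>
    (isOpen_discrete _).preimage ((continuous_apply j).comp continuous_subtype_val)

lemma continuous_of_locConst (n : ℕ) (g : ShiftSpace M → ℝ)
    (hg : ∀ x y, Agree M n x y → g x = g y) : Continuous g := by
  apply IsLocallyConstant.continuous
  rw [IsLocallyConstant.iff_exists_open]
  intro x
  exact ⟨{y | Agree M n x y}, isOpen_agreeCyl n x, agree_refl n x,
    fun y hy => (hg x y hy).symm⟩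

lemma symb_mem_BSet (x : ShiftSpace M) : ∀ (nn i : ℕ), x.1 i ∈ BSet M nn := by
  intro nn
  induction nn with
  | zero => exact fun i => ⟨x.1 (i+1), x.2 i⟩
  | succ nn ih => exact fun i => ⟨x.1 (i+1), ih (i+1), x.2 i⟩

lemma symb_mem_BInf (x : ShiftSpace M) (i : ℕ) : x.1 i ∈ BInf M :=
  Set.mem_iInter.2 fun nn => symb_mem_BSet x nn i

/-- continuity of `A` from uniform continuity. -/
lemma continuous_of_ucont (A : ShiftSpace M → ℝ)
    (hucont : ∀ ε : ℝ, 0 < ε → ∃ k : ℕ, ∀ x y : ShiftSpace M, Agree M k x y → |A x - A y| ≤ ε) :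
    Continuous A := by
  rw [continuous_iff_continuousAt]
  intro x
  rw [ContinuousAt, Metric.tendsto_nhds]
  intro ε hε
  obtain ⟨k, hk⟩ := hucont (ε/2) (by linarith)
  filter_upwards [(isOpen_agreeCyl k x).mem_nhds (agree_refl k x)] with y hy
  have := hk x y hy
  rw [Real.dist_eq]
  have : |A y - A x| ≤ ε/2 := by rw [abs_sub_comm]; exact this
  linarith

end BetaDualAux
namespace BetaDualAux

open Finset
open scoped ENNReal NNReal

/-- periodic sequence from a word of length `N`. -/
def perFun (W : ℕ → ℕ) (N : ℕ) : ℕ → ℕ := fun j => W (j % N)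

lemma perFun_inShift {M : ℕ → ℕ → Bool} (W : ℕ → ℕ) (N : ℕ) (hN : 0 < N)
    (h : ∀ t, t + 1 < N → M (W t) (W (t+1)) = true)
    (hwrap : M (W (N-1)) (W 0) = true) : InShift M (perFun W N) := by
  intro j
  show M (W (j % N)) (W ((j+1) % N)) = true
  obtain ⟨q, r, hr, rfl⟩ : ∃ q r, r < N ∧ j = N*q + r :=
    ⟨j / N, j % N, Nat.mod_lt _ hN, by rw [Nat.div_add_mod]⟩
  have h1 : (N*q + r) % N = r := by
    rw [Nat.mul_add_mod]; exact Nat.mod_eq_of_lt hr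
  rcases Nat.lt_or_ge (r+1) N with h2 | h2
  · have h3 : (N*q + r + 1) % N = r + 1 := by
      have : N*q + r + 1 = N*q + (r+1) := by omega
      rw [this, Nat.mul_add_mod]; exact Nat.mod_eq_of_lt h2
    rw [h1, h3]; exact h r h2
  · have hrN : r = N - 1 := by omega
    have h3 : (N*q + r + 1) % N = 0 := by
      have : N*q + r + 1 = N*(q+1) := by rw [Nat.mul_succ]; omega
      rw [this, Nat.mul_mod_right]
    rw [h1, h3, hrN]; exact hwrap

lemma perFun_periodic {M : ℕ → ℕ → Bool} (z : ShiftSpace M) (W : ℕ → ℕ) (N : ℕ) (hN : 0 < N)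
    (hz : z.1 = perFun W N) : (shiftMap M)^[N] z = z := by
  apply Subtype.ext
  funext j
  rw [shift_iter_coe, hz]
  show W ((j + N) % N) = W (j % N)
  rw [Nat.add_mod_right]

/-- the uniform measure on the (pre-)periodic orbit of `z` of length `N`. -/
noncomputable def perMeas (M : ℕ → ℕ → Bool) (z : ShiftSpace M) (N : ℕ) :
    Measure (ShiftSpace M) :=
  ((N : ℝ≥0∞))⁻¹ • ∑ t ∈ Finset.range N, MeasureTheory.Measure.dirac ((shiftMap M)^[t] z)

lemma integrable_dirac' {M : ℕ → ℕ → Bool} (g : ShiftSpace M → ℝ) (w : ShiftSpace M) :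
    MeasureTheory.Integrable g (MeasureTheory.Measure.dirac w) := by
  have hae : g =ᵐ[MeasureTheory.Measure.dirac w] (fun _ => g w) := by
    rw [MeasureTheory.ae_dirac_eq]
    exact Filter.eventually_pure.2 rfl
  exact (MeasureTheory.integrable_const (g w)).congr hae.symm

lemma integrable_perMeas {M : ℕ → ℕ → Bool} (g : ShiftSpace M → ℝ) (z : ShiftSpace M) (N : ℕ) (hN : N ≠ 0) :
    MeasureTheory.Integrable g (perMeas M z N) := by
  unfold perMeas
  refine MeasureTheory.Integrable.smul_measure ?_ (by simp [hN])
  rw [MeasureTheory.integrable_finset_sum_measure]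
  exact fun t _ => integrable_dirac' g _

lemma integral_perMeas {M : ℕ → ℕ → Bool} (g : ShiftSpace M → ℝ) (z : ShiftSpace M) (N : ℕ) (hN : N ≠ 0) :
    ∫ x, g x ∂(perMeas M z N) = (N:ℝ)⁻¹ * ∑ t ∈ Finset.range N, g ((shiftMap M)^[t] z) := by
  unfold perMeas
  rw [MeasureTheory.integral_smul_measure,
    MeasureTheory.integral_finset_sum_measure (fun t _ => integrable_dirac' g _)]
  simp [MeasureTheory.integral_dirac]

lemma perMeas_prob {M : ℕ → ℕ → Bool} (z : ShiftSpace M) (N : ℕ) (hN : N ≠ 0) :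
    MeasureTheory.IsProbabilityMeasure (perMeas M z N) := by
  constructor
  unfold perMeas
  rw [MeasureTheory.Measure.smul_apply]
  rw [MeasureTheory.Measure.finset_sum_apply]
  simp only [MeasureTheory.Measure.dirac_apply_of_mem (Set.mem_univ _)]
  rw [Finset.sum_const, Finset.card_range]
  simp only [nsmul_eq_mul, mul_one, smul_eq_mul]
  rw [ENNReal.inv_mul_cancel (by exact_mod_cast hN) (by simp)]

lemma map_finset_sum_meas {α β : Type*} [MeasurableSpace α] [MeasurableSpace β]
    {f : α → β} (hf : Measurable f) (N : ℕ) (μ : ℕ → MeasureTheory.Measure α) :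
    MeasureTheory.Measure.map f (∑ t ∈ Finset.range N, μ t)
      = ∑ t ∈ Finset.range N, MeasureTheory.Measure.map f (μ t) := by
  induction N with
  | zero => simp
  | succ N ih =>
    rw [Finset.sum_range_succ, MeasureTheory.Measure.map_add _ _ hf, ih,
      Finset.sum_range_succ]

lemma perMeas_invariant {M : ℕ → ℕ → Bool} (z : ShiftSpace M) (N : ℕ) (hN : N ≠ 0)
    (hz : (shiftMap M)^[N] z = z) :
    (perMeas M z N).map (shiftMap M) = perMeas M z N := by
  unfold perMeas
  rw [MeasureTheory.Measure.map_smul, map_finset_sum_meas measurable_shiftMap]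
  congr 1
  have hterm : ∀ t, MeasureTheory.Measure.map (shiftMap M)
      (MeasureTheory.Measure.dirac ((shiftMap M)^[t] z))
      = MeasureTheory.Measure.dirac ((shiftMap M)^[t+1] z) := by
    intro t
    rw [MeasureTheory.Measure.map_dirac' measurable_shiftMap]
    congr 1
    rw [Function.iterate_succ_apply']
  calc ∑ t ∈ Finset.range N, MeasureTheory.Measure.map (shiftMap M)
        (MeasureTheory.Measure.dirac ((shiftMap M)^[t] z))
      = ∑ t ∈ Finset.range N, MeasureTheory.Measure.dirac ((shiftMap M)^[t+1] z) := by
        exact Finset.sum_congr rfl fun t _ => hterm t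
    _ = ∑ t ∈ Finset.range N, MeasureTheory.Measure.dirac ((shiftMap M)^[t] z) := by
        obtain ⟨N', rfl⟩ : ∃ N', N = N' + 1 := ⟨N - 1, by omega⟩
        rw [Finset.sum_range_succ, Finset.sum_range_succ']
        congr 1
        rw [hz]
        rfl
    _ = _ := rfl

lemma perMeas_invProb {M : ℕ → ℕ → Bool} (z : ShiftSpace M) (N : ℕ) (hN : N ≠ 0)
    (hz : (shiftMap M)^[N] z = z) : InvProb M (perMeas M z N) :=
  ⟨perMeas_prob z N hN, perMeas_invariant z N hN hz⟩

/-- the key upper bound: periodic orbit averages are at most `betaA`. -/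
lemma sum_le_betaA {M : ℕ → ℕ → Bool} (g : ShiftSpace M → ℝ) (hb : BddAbove (Set.range g))
    (z : ShiftSpace M) (N : ℕ) (hN : N ≠ 0) (hz : (shiftMap M)^[N] z = z) :
    ∑ t ∈ Finset.range N, g ((shiftMap M)^[t] z) ≤ N * betaA M g := by
  set S := {r | ∃ μ : MeasureTheory.Measure (ShiftSpace M),
    InvProb M μ ∧ MeasureTheory.Integrable g μ ∧ ∫ x, g x ∂μ = r} with hS
  have hmem : ((N:ℝ)⁻¹ * ∑ t ∈ Finset.range N, g ((shiftMap M)^[t] z)) ∈ S :=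
    ⟨perMeas M z N, perMeas_invProb z N hN hz, integrable_perMeas g z N hN,
      integral_perMeas g z N hN⟩
  have hbddS : BddAbove S := by
    refine ⟨sSup (Set.range g), ?_⟩
    rintro r ⟨μ, hμ, hgi, rfl⟩
    haveI := hμ.1
    calc ∫ x, g x ∂μ ≤ ∫ _, sSup (Set.range g) ∂μ := by
          apply MeasureTheory.integral_mono hgi (MeasureTheory.integrable_const _)
          exact fun x => le_csSup hb ⟨x, rfl⟩
      _ = sSup (Set.range g) := by simp
  have hle : (N:ℝ)⁻¹ * ∑ t ∈ Finset.range N, g ((shiftMap M)^[t] z) ≤ betaA M g :=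
    le_csSup hbddS hmem
  have hNpos : (0:ℝ) < N := by exact_mod_cast Nat.pos_of_ne_zero hN
  calc ∑ t ∈ Finset.range N, g ((shiftMap M)^[t] z)
      = N * ((N:ℝ)⁻¹ * ∑ t ∈ Finset.range N, g ((shiftMap M)^[t] z)) := by
        field_simp
    _ ≤ N * betaA M g := by
        apply mul_le_mul_of_nonneg_left hle (le_of_lt hNpos)

end BetaDualAux
namespace BetaDualAux

open MeasureTheory Filter
open scoped ENNReal

lemma integral_le_subaction {M : ℕ → ℕ → Bool}
    (μ : Measure (ShiftSpace M)) (hμ : InvProb M μ)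
    (A : ShiftSpace M → ℝ) (hAm : Measurable A) (hAi : Integrable A μ)
    (hbdd : BddAbove (Set.range A))
    (f : ShiftSpace M → ℝ) (hf : Continuous f) (c : ℝ)
    (hsub : ∀ x, A x + f x - f (shiftMap M x) ≤ c) :
    ∫ x, A x ∂μ ≤ c := by
  by_contra hcon
  push_neg at hcon
  haveI hprob := hμ.1
  have hfm : Measurable f := hf.measurable
  have hσ : Measurable (shiftMap M) := measurable_shiftMap
  have hσn : ∀ nn : ℕ, Measurable ((shiftMap M)^[nn]) := fun nn => hσ.iterate nn
  have hmap : ∀ nn : ℕ, μ.map ((shiftMap M)^[nn]) = μ := by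
    intro nn
    induction nn with
    | zero => simpa using Measure.map_id
    | succ nn ih =>
      have hcomp : (shiftMap M)^[nn+1] = (shiftMap M) ∘ (shiftMap M)^[nn] := by
        funext x; exact Function.iterate_succ_apply' _ _ _
      rw [hcomp, ← Measure.map_map hσ (hσn nn), ih, hμ.2]
  haveI : Nonempty (ShiftSpace M) := by
    by_contra he
    rw [not_nonempty_iff] at he
    have h0 : μ Set.univ = 0 := by
      rw [Set.univ_eq_empty_iff.2 he]; exact measure_empty
    rw [measure_univ] at h0; exact one_ne_zero h0
  set φ : ShiftSpace M → ℝ := fun x => A x - c with hφ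
  set b : ℝ := sSup (Set.range A) - c with hb
  have hφle : ∀ x, φ x ≤ b := fun x => by
    have : A x ≤ sSup (Set.range A) := le_csSup hbdd ⟨x, rfl⟩
    simp only [hφ, hb]; linarith
  have hφm : Measurable φ := hAm.sub measurable_const
  have hφi : Integrable φ μ := hAi.sub (integrable_const c)
  set m : ℝ := ∫ x, φ x ∂μ with hm
  have hm0 : 0 < m := by
    have h1 : ∫ x, φ x ∂μ = (∫ x, A x ∂μ) - c := by
      rw [hφ] at *
      rw [integral_sub hAi (integrable_const c)]
      simp
    rw [hm, h1]; linarith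
  have hmb : m ≤ b := by
    rw [hm]
    calc ∫ x, φ x ∂μ ≤ ∫ _, b ∂μ := integral_mono hφi (integrable_const b) hφle
      _ = b := by simp
  have hbpos : 0 < b := lt_of_lt_of_le hm0 hmb
  set δ : ℝ := m / 3 with hδ
  have hδpos : 0 < δ := by rw [hδ]; linarith
  have hδm : δ < m := by rw [hδ]; linarith
  set η : ℝ := (m - δ) / b with hη
  have hηpos : 0 < η := div_pos (by linarith) hbpos
  set S : ℕ → ShiftSpace M → ℝ :=
    fun nn x => ∑ j ∈ Finset.range nn, φ ((shiftMap M)^[j] x) with hSdef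
  have hSm : ∀ nn, Measurable (S nn) := fun nn =>
    Finset.measurable_sum _ fun j _ => hφm.comp (hσn j)
  have hSle : ∀ nn x, S nn x ≤ f ((shiftMap M)^[nn] x) - f x := by
    intro nn
    induction nn with
    | zero => intro x; simp [hSdef]
    | succ nn ih =>
      intro x
      have h1 := hsub ((shiftMap M)^[nn] x)
      have h2 := ih x
      have h3 : (shiftMap M)^[nn+1] x = shiftMap M ((shiftMap M)^[nn] x) :=
        Function.iterate_succ_apply' _ _ _
      have h4 : S (nn+1) x = S nn x + φ ((shiftMap M)^[nn] x) := by
        rw [hSdef]; exact Finset.sum_range_succ _ nn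
      rw [h4, h3]
      simp only [hφ] at *
      linarith
  have hcompi : ∀ j : ℕ, Integrable (fun x => φ ((shiftMap M)^[j] x)) μ := by
    intro j
    have h1 : Integrable φ (μ.map ((shiftMap M)^[j])) := by rw [hmap j]; exact hφi
    exact (integrable_map_measure hφm.aestronglyMeasurable (hσn j).aemeasurable).mp h1
  have hcompint : ∀ j : ℕ, ∫ x, φ ((shiftMap M)^[j] x) ∂μ = m := by
    intro j
    have h1 : ∫ x, φ x ∂(μ.map ((shiftMap M)^[j]))
        = ∫ x, φ ((shiftMap M)^[j] x) ∂μ :=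
      integral_map (hσn j).aemeasurable hφm.aestronglyMeasurable
    rw [← h1, hmap j, hm]
  have hSi : ∀ nn, Integrable (S nn) μ := fun nn =>
    integrable_finset_sum _ fun j _ => hcompi j
  have hSint : ∀ nn : ℕ, ∫ x, S nn x ∂μ = nn * m := by
    intro nn
    rw [hSdef]
    rw [integral_finset_sum _ fun j _ => hcompi j]
    simp [hcompint, Finset.sum_const]
  -- the Markov-type lower bound on the measure of E nn
  set E : ℕ → Set (ShiftSpace M) := fun nn => {x | δ * nn < S nn x} with hE
  have hEmeas : ∀ nn, MeasurableSet (E nn) := fun nn =>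
    measurableSet_lt measurable_const (hSm nn)
  have hEbound : ∀ nn : ℕ, 1 ≤ nn → ENNReal.ofReal η ≤ μ (E nn) := by
    intro nn hnn
    have hnnR : (1:ℝ) ≤ (nn:ℝ) := by exact_mod_cast hnn
    have hptw : ∀ x, S nn x ≤ δ * nn + (E nn).indicator (fun _ => (b-δ)*nn) x := by
      intro x
      by_cases hx : x ∈ E nn
      · rw [Set.indicator_of_mem hx]
        have h1 : S nn x ≤ b * nn := by
          rw [hSdef]
          calc ∑ j ∈ Finset.range nn, φ ((shiftMap M)^[j] x)
              ≤ ∑ _j ∈ Finset.range nn, b := Finset.sum_le_sum fun j _ => hφle _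
            _ = b * nn := by rw [Finset.sum_const, Finset.card_range]; ring
        linarith
      · rw [Set.indicator_of_notMem hx]
        have h1 : ¬ δ * nn < S nn x := hx
        push_neg at h1
        linarith
    have hIndInt : Integrable
        (fun x => δ * nn + (E nn).indicator (fun _ => (b-δ)*nn) x) μ :=
      (integrable_const _).add ((integrable_const _).indicator (hEmeas nn))
    have h2 : (nn:ℝ) * m ≤ δ * nn + (b-δ)*nn * (μ (E nn)).toReal := by
      have h3 := integral_mono (hSi nn) hIndInt hptw
      rw [hSint nn] at h3
      rw [integral_add (integrable_const _) ((integrable_const _).indicator (hEmeas nn)),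
        integral_const, integral_indicator_const _ (hEmeas nn)] at h3
      simpa [measure_univ, mul_comm, Measure.real] using h3
    have hτ : η ≤ (μ (E nn)).toReal := by
      set τ := (μ (E nn)).toReal with hτdef
      have hτ0 : 0 ≤ τ := ENNReal.toReal_nonneg
      have h4 : (m - δ) * nn ≤ (b - δ) * nn * τ := by nlinarith
      have h5 : (m - δ) ≤ (b - δ) * τ := by nlinarith
      have h6 : (m - δ) ≤ b * τ := by nlinarith
      rw [hη, div_le_iff₀ hbpos]
      linarith
    exact ENNReal.ofReal_le_of_le_toReal hτ
  -- choose thresholds K and T₀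
  have hlow : Tendsto (fun i : ℕ => μ {x | f x < -(i:ℝ)}) atTop (𝓝 0) := by
    have hinter : ⋂ i : ℕ, {x : ShiftSpace M | f x < -(i:ℝ)} = ∅ := by
      ext x
      simp only [Set.mem_iInter, Set.mem_setOf_eq, Set.mem_empty_iff_false, iff_false, not_forall,
        not_lt]
      obtain ⟨i, hi⟩ := exists_nat_ge (-(f x))
      exact ⟨i, by linarith⟩
    have h1 := tendsto_measure_iInter_atTop (μ := μ)
      (s := fun i : ℕ => {x : ShiftSpace M | f x < -(i:ℝ)})
      (fun i => (measurableSet_lt hfm measurable_const).nullMeasurableSet)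
      (fun i j hij x hx => by
        simp only [Set.mem_setOf_eq] at *
        have : (i:ℝ) ≤ (j:ℝ) := by exact_mod_cast hij
        linarith)
      ⟨0, measure_ne_top μ _⟩
    rw [hinter, measure_empty] at h1
    exact h1
  have hhigh : Tendsto (fun i : ℕ => μ {x | (i:ℝ) < f x}) atTop (𝓝 0) := by
    have hinter : ⋂ i : ℕ, {x : ShiftSpace M | (i:ℝ) < f x} = ∅ := by
      ext x
      simp only [Set.mem_iInter, Set.mem_setOf_eq, Set.mem_empty_iff_false, iff_false, not_forall,
        not_lt]
      obtain ⟨i, hi⟩ := exists_nat_ge (f x)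
      exact ⟨i, hi⟩
    have h1 := tendsto_measure_iInter_atTop (μ := μ)
      (s := fun i : ℕ => {x : ShiftSpace M | (i:ℝ) < f x})
      (fun i => (measurableSet_lt measurable_const hfm).nullMeasurableSet)
      (fun i j hij x hx => by
        simp only [Set.mem_setOf_eq] at *
        have : (i:ℝ) ≤ (j:ℝ) := by exact_mod_cast hij
        linarith)
      ⟨0, measure_ne_top μ _⟩
    rw [hinter, measure_empty] at h1
    exact h1
  have hη2pos : (0:ℝ≥0∞) < ENNReal.ofReal (η/2) := ENNReal.ofReal_pos.2 (by linarith)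
  obtain ⟨K, hK⟩ := (hlow.eventually_lt_const hη2pos).exists
  obtain ⟨T₀, hT₀⟩ := (hhigh.eventually_lt_const hη2pos).exists
  -- choose nn
  set nn : ℕ := max 1 ⌈((T₀:ℝ) + K) / δ⌉₊ with hnn
  have hnn1 : 1 ≤ nn := le_max_left _ _
  have hnnbig : (T₀:ℝ) + K ≤ δ * nn := by
    have h1 : ((T₀:ℝ) + K) / δ ≤ (⌈((T₀:ℝ) + K) / δ⌉₊ : ℝ) := Nat.le_ceil _
    have h2 : ((⌈((T₀:ℝ) + K) / δ⌉₊ : ℕ) : ℝ) ≤ (nn : ℝ) := by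
      exact Nat.cast_le.2 (le_max_right _ _)
    have h3 : ((T₀:ℝ) + K) / δ ≤ (nn:ℝ) := le_trans h1 h2
    calc (T₀:ℝ) + K = (((T₀:ℝ) + K) / δ) * δ := by field_simp
      _ ≤ (nn:ℝ) * δ := mul_le_mul_of_nonneg_right h3 (le_of_lt hδpos)
      _ = δ * nn := by ring
  -- the contradiction
  set X : Set (ShiftSpace M) := E nn ∩ {x | -(K:ℝ) ≤ f x} with hX
  have hXsub : X ⊆ {x | (T₀:ℝ) < f ((shiftMap M)^[nn] x)} := by
    rintro x ⟨hx1, hx2⟩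
    have h1 : δ * nn < S nn x := hx1
    have h2 : S nn x ≤ f ((shiftMap M)^[nn] x) - f x := hSle nn x
    have h3 : -(K:ℝ) ≤ f x := hx2
    simp only [Set.mem_setOf_eq]
    linarith
  have hmapT : μ {x | (T₀:ℝ) < f ((shiftMap M)^[nn] x)} = μ {x | (T₀:ℝ) < f x} := by
    have h1 : {x | (T₀:ℝ) < f ((shiftMap M)^[nn] x)}
        = ((shiftMap M)^[nn]) ⁻¹' {x | (T₀:ℝ) < f x} := rfl
    rw [h1, ← Measure.map_apply (hσn nn) (measurableSet_lt measurable_const hfm), hmap nn]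
  have hEsub : E nn ⊆ X ∪ {x | f x < -(K:ℝ)} := by
    intro x hx
    rcases le_or_gt (-(K:ℝ)) (f x) with h | h
    · exact Or.inl ⟨hx, h⟩
    · exact Or.inr h
  have hXlt : μ X < ENNReal.ofReal (η/2) := by
    calc μ X ≤ μ {x | (T₀:ℝ) < f ((shiftMap M)^[nn] x)} := measure_mono hXsub
      _ = μ {x | (T₀:ℝ) < f x} := hmapT
      _ < ENNReal.ofReal (η/2) := hT₀
  have hfinal : μ (E nn) < ENNReal.ofReal η := by
    calc μ (E nn) ≤ μ X + μ {x | f x < -(K:ℝ)} :=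
          le_trans (measure_mono hEsub) (measure_union_le _ _)
      _ < ENNReal.ofReal (η/2) + ENNReal.ofReal (η/2) := ENNReal.add_lt_add hXlt hK
      _ = ENNReal.ofReal η := by
          rw [← ENNReal.ofReal_add (by linarith) (by linarith)]
          norm_num
  exact absurd (lt_of_le_of_lt (hEbound nn hnn1) hfinal) (lt_irrefl _)

end BetaDualAux
namespace BetaDualAux

open scoped Classical

variable {M : ℕ → ℕ → Bool} {F : Set ℕ} {K₀ : ℕ}

/-- a fixed choice of connecting words. -/
noncomputable def conn (hprim : Primitive M F K₀) (i j : ℕ) : ℕ → ℕ :=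
  if c : i ∈ BInf M ∧ j ∈ BInf M then Classical.choose (hprim i c.1 j c.2) else fun _ => 0

lemma conn_spec (hprim : Primitive M F K₀) {i j : ℕ} (hi : i ∈ BInf M) (hj : j ∈ BInf M) :
    conn hprim i j 0 = i ∧ conn hprim i j (K₀ + 1) = j ∧
      (∀ t, 1 ≤ t → t ≤ K₀ → conn hprim i j t ∈ F) ∧
      (∀ t ≤ K₀, M (conn hprim i j t) (conn hprim i j (t+1)) = true) := by
  unfold conn
  rw [dif_pos ⟨hi, hj⟩]
  exact Classical.choose_spec (hprim i hi j hj)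

lemma conn_zero (hprim : Primitive M F K₀) {i j : ℕ} (hi : i ∈ BInf M) (hj : j ∈ BInf M) :
    conn hprim i j 0 = i := (conn_spec hprim hi hj).1

lemma conn_last (hprim : Primitive M F K₀) {i j : ℕ} (hi : i ∈ BInf M) (hj : j ∈ BInf M) :
    conn hprim i j (K₀ + 1) = j := (conn_spec hprim hi hj).2.1

lemma conn_F (hprim : Primitive M F K₀) {i j : ℕ} (hi : i ∈ BInf M) (hj : j ∈ BInf M)
    {t : ℕ} (h1 : 1 ≤ t) (h2 : t ≤ K₀) : conn hprim i j t ∈ F :=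
  (conn_spec hprim hi hj).2.2.1 t h1 h2

lemma conn_trans (hprim : Primitive M F K₀) {i j : ℕ} (hi : i ∈ BInf M) (hj : j ∈ BInf M)
    {t : ℕ} (ht : t ≤ K₀) :
    M (conn hprim i j t) (conn hprim i j (t+1)) = true :=
  (conn_spec hprim hi hj).2.2.2 t ht

/-- truncation of a sequence to its first `n` values. -/
def truncW (n : ℕ) (g : ℕ → ℕ) : ℕ → ℕ := fun i => if i < n then g i else 0

lemma truncW_eq {n : ℕ} {g g' : ℕ → ℕ} (h : ∀ i < n, g i = g' i) :
    truncW n g = truncW n g' := by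
  funext i; unfold truncW; split_ifs with hi
  · exact h i hi
  · rfl

lemma truncW_lt {n : ℕ} (g : ℕ → ℕ) {i : ℕ} (hi : i < n) : truncW n g i = g i := by
  unfold truncW; rw [if_pos hi]

/-- the generic closed word: `h`-block of length `a`, connector, `v`-block of length `n`,
connector back to `h 0`. -/
noncomputable def wordG (hprim : Primitive M F K₀) (v : ShiftSpace M) (n a : ℕ)
    (h : ℕ → ℕ) : ℕ → ℕ := fun t =>
  if t < a then h t
  else if t < a + K₀ then conn hprim (h (a-1)) (v.1 0) (t - a + 1)
  else if t < a + n + K₀ then v.1 (t - (a + K₀))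
  else conn hprim (v.1 (n-1)) (h 0) (t - (a + n + K₀) + 1)

section WordG

variable (hprim : Primitive M F K₀) (v : ShiftSpace M) (n a : ℕ) (h : ℕ → ℕ)

lemma wordG_eval1 {t : ℕ} (ht : t < a) : wordG hprim v n a h t = h t := by
  unfold wordG; rw [if_pos ht]

lemma wordG_eval2 {t : ℕ} (h1 : a ≤ t) (h2 : t < a + K₀) :
    wordG hprim v n a h t = conn hprim (h (a-1)) (v.1 0) (t - a + 1) := by
  unfold wordG; rw [if_neg (by omega), if_pos h2]

lemma wordG_eval3 {t : ℕ} (h1 : a + K₀ ≤ t) (h2 : t < a + n + K₀) :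
    wordG hprim v n a h t = v.1 (t - (a + K₀)) := by
  unfold wordG; rw [if_neg (by omega), if_neg (by omega), if_pos h2]

lemma wordG_eval4 {t : ℕ} (h1 : a + n + K₀ ≤ t) :
    wordG hprim v n a h t = conn hprim (v.1 (n-1)) (h 0) (t - (a + n + K₀) + 1) := by
  unfold wordG; rw [if_neg (by omega), if_neg (by omega), if_neg (by omega)]

end WordG

/-- admissibility of the `h`-block. -/
def WordOK (M : ℕ → ℕ → Bool) (a : ℕ) (h : ℕ → ℕ) : Prop :=
  (∀ i, i + 1 < a → M (h i) (h (i+1)) = true) ∧ h 0 ∈ BInf M ∧ h (a-1) ∈ BInf M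

lemma wordG_inShift (hprim : Primitive M F K₀) (v : ShiftSpace M) (n a : ℕ)
    (hn : 1 ≤ n) (ha : 1 ≤ a) (h : ℕ → ℕ) (hok : WordOK M a h) :
    InShift M (perFun (wordG hprim v n a h) (a + n + 2*K₀)) := by
  set W := wordG hprim v n a h with hW
  set L := a + n + 2*K₀ with hL
  have hv0 : v.1 0 ∈ BInf M := symb_mem_BInf v 0
  have hvn : v.1 (n-1) ∈ BInf M := symb_mem_BInf v (n-1)
  have hh0 : h 0 ∈ BInf M := hok.2.1
  have hha : h (a-1) ∈ BInf M := hok.2.2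
  -- value of W at the junction a
  have hWa : W a = conn hprim (h (a-1)) (v.1 0) 1 := by
    by_cases hK : K₀ = 0
    · subst hK
      rw [hW, wordG_eval3 hprim v n a h (by omega) (by omega)]
      have h1 : a - (a + 0) = 0 := by omega
      rw [h1]
      exact (conn_last hprim hha hv0).symm
    · rw [hW, wordG_eval2 hprim v n a h le_rfl (by omega)]
      have h1 : a - a + 1 = 1 := by omega
      rw [h1]
  -- value of W at the junction a + n + K₀
  have hWb : W (a + n + K₀) = conn hprim (v.1 (n-1)) (h 0) 1 := by
    rw [hW, wordG_eval4 hprim v n a h le_rfl]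
    have h1 : a + n + K₀ - (a + n + K₀) + 1 = 1 := by omega
    rw [h1]
  -- value of W at L - 1
  have hWend : W (L - 1) = conn hprim (v.1 (n-1)) (h 0) K₀ := by
    by_cases hK : K₀ = 0
    · subst hK
      rw [hW, wordG_eval3 hprim v n a h (by omega) (by omega)]
      have h1 : L - 1 - (a + 0) = n - 1 := by omega
      rw [h1]
      exact (conn_zero hprim hvn hh0).symm
    · rw [hW, wordG_eval4 hprim v n a h (by omega)]
      have h1 : L - 1 - (a + n + K₀) + 1 = K₀ := by omega
      rw [h1]
  apply perFun_inShift W L (by omega)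
  · -- internal transitions
    intro t ht
    by_cases h1 : t + 1 < a
    · rw [hW, wordG_eval1 hprim v n a h (by omega), wordG_eval1 hprim v n a h h1]
      exact hok.1 t h1
    · by_cases h2 : t + 1 = a
      · have hta : t = a - 1 := by omega
        rw [hW, wordG_eval1 hprim v n a h (by omega), h2, ← hW, hWa, hta]
        have h3 := conn_trans hprim hha hv0 (t := 0) (Nat.zero_le _)
        rw [conn_zero hprim hha hv0] at h3
        simpa using h3
      · by_cases h3 : t + 1 < a + K₀
        · rw [hW, wordG_eval2 hprim v n a h (by omega) (by omega),
            wordG_eval2 hprim v n a h (by omega) h3]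
          have he : t + 1 - a + 1 = (t - a + 1) + 1 := by omega
          rw [he]
          exact conn_trans hprim hha hv0 (by omega)
        · by_cases h4 : t + 1 = a + K₀
          · have hK : 1 ≤ K₀ := by omega
            rw [hW, wordG_eval2 hprim v n a h (by omega) (by omega), h4,
              wordG_eval3 hprim v n a h le_rfl (by omega)]
            have he1 : t - a + 1 = K₀ := by omega
            have he2 : a + K₀ - (a + K₀) = 0 := by omega
            rw [he1, he2]
            have h5 := conn_trans hprim hha hv0 (t := K₀) le_rfl
            rw [conn_last hprim hha hv0] at h5
            exact h5
          · by_cases h5 : t + 1 < a + n + K₀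
            · rw [hW, wordG_eval3 hprim v n a h (by omega) (by omega),
                wordG_eval3 hprim v n a h (by omega) h5]
              have he : t + 1 - (a + K₀) = (t - (a + K₀)) + 1 := by omega
              rw [he]
              exact v.2 _
            · by_cases h6 : t + 1 = a + n + K₀
              · rw [hW, wordG_eval3 hprim v n a h (by omega) (by omega), h6, ← hW, hWb]
                have he : t - (a + K₀) = n - 1 := by omega
                rw [he]
                have h7 := conn_trans hprim hvn hh0 (t := 0) (Nat.zero_le _)
                rw [conn_zero hprim hvn hh0] at h7
                simpa using h7
              · rw [hW, wordG_eval4 hprim v n a h (by omega),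
                  wordG_eval4 hprim v n a h (by omega)]
                have he : t + 1 - (a + n + K₀) + 1 = (t - (a + n + K₀) + 1) + 1 := by omega
                rw [he]
                exact conn_trans hprim hvn hh0 (by omega)
  · -- wrap-around transition
    rw [hWend, hW, wordG_eval1 hprim v n a h (by omega)]
    have h7 := conn_trans hprim hvn hh0 (t := K₀) le_rfl
    rw [conn_last hprim hvn hh0] at h7
    exact h7

/-- the canonical loop point through the head `h` (length `n`) and the anchor `v`. -/
noncomputable def loopPt (hprim : Primitive M F K₀) (v : ShiftSpace M) (n : ℕ)
    (hn : 1 ≤ n) (h : ℕ → ℕ) : ShiftSpace M :=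
  if hc : WordOK M n h then
    ⟨perFun (wordG hprim v n n h) (n + n + 2*K₀), wordG_inShift hprim v n n hn hn h hc⟩
  else v

lemma loopPt_coe (hprim : Primitive M F K₀) (v : ShiftSpace M) (n : ℕ)
    (hn : 1 ≤ n) (h : ℕ → ℕ) (hc : WordOK M n h) :
    (loopPt hprim v n hn h).1 = perFun (wordG hprim v n n h) (n + n + 2*K₀) := by
  unfold loopPt; rw [dif_pos hc]

end BetaDualAux
namespace BetaDualAux

open Finset

lemma exists_subaction {M : ℕ → ℕ → Bool} {F : Set ℕ} {K₀ : ℕ}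
    (hprim : Primitive M F K₀) (v : ShiftSpace M)
    (A' : ShiftSpace M → ℝ) (n : ℕ) (hn : 1 ≤ n)
    (hloc : ∀ x y, Agree M n x y → A' x = A' y)
    (hb : BddAbove (Set.range A'))
    (m : ℝ) (hm : ∀ w : ShiftSpace M, w.1 0 ∈ F → m ≤ A' w)
    (ε : ℝ) (hε : 0 < ε) :
    ∃ f : ShiftSpace M → ℝ, Continuous f ∧
      ∀ x, A' x + f x - f (shiftMap M x) ≤ betaA M A' + ε := by
  classical
  set β : ℝ := betaA M A' with hβ
  set c : ℝ := β + ε with hc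
  set L : ℕ := n + n + 2*K₀ with hL
  -- canonical correction terms
  set E1 : ShiftSpace M → ℝ := fun x =>
    ∑ s ∈ Finset.range n, A' ((shiftMap M)^[s] (loopPt hprim v n hn (truncW n x.1))) with hE1
  set E2 : (ℕ → ℕ) → ℝ := fun g =>
    ∑ s ∈ Finset.range n,
      A' ((shiftMap M)^[n+K₀+s] (loopPt hprim v n hn (truncW n g))) with hE2
  set R : (ℕ → ℕ) → ℝ := fun g => min (E2 g) 0 with hR
  have hRdep : ∀ g g' : ℕ → ℕ, (∀ i < n, g i = g' i) → R g = R g' := by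
    intro g g' hgg
    rw [hR]
    simp only
    rw [hE2]
    simp only
    rw [truncW_eq hgg]
  -- the defining sets
  set T : ShiftSpace M → Set ℝ := fun x =>
    {r | ∃ (k : ℕ) (y : ShiftSpace M), (shiftMap M)^[k] y = x ∧
      r = (∑ t ∈ Finset.range k, A' ((shiftMap M)^[t] y)) - k * c + R y.1} with hT
  -- MASTER BOUND
  have hmaster : ∀ (x : ShiftSpace M) (k : ℕ) (y : ShiftSpace M),
      (shiftMap M)^[k] y = x →
      (∑ t ∈ Finset.range k, A' ((shiftMap M)^[t] y)) - k * c + R y.1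
        ≤ (2*n + 2*K₀) * β - E1 x - 2*K₀*m := by
    intro x k y hy
    have hxy : ∀ i, x.1 i = y.1 (i + k) := by
      intro i; rw [← hy, shift_iter_coe]
    set a : ℕ := k + n with ha
    set N : ℕ := a + n + 2*K₀ with hN
    have hokZ : WordOK M a y.1 :=
      ⟨fun i _ => y.2 i, symb_mem_BInf y 0, symb_mem_BInf y (a-1)⟩
    set z : ShiftSpace M := ⟨perFun (wordG hprim v n a y.1) N,
      wordG_inShift hprim v n a hn (by omega) y.1 hokZ⟩ with hz
    have hzcoe : ∀ j, z.1 j = wordG hprim v n a y.1 (j % N) := fun j => rfl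
    have hz' : ∀ j, j < N → z.1 j = wordG hprim v n a y.1 j := fun j hj => by
      rw [hzcoe, Nat.mod_eq_of_lt hj]
    have hper : (shiftMap M)^[N] z = z := perFun_periodic z (wordG hprim v n a y.1) N (by omega) (by rw [hz])
    have hokX : WordOK M n (truncW n x.1) := by
      refine ⟨fun i hi => ?_, ?_, ?_⟩
      · rw [truncW_lt _ (by omega), truncW_lt _ (by omega)]; exact x.2 i
      · rw [truncW_lt _ (by omega)]; exact symb_mem_BInf x 0
      · rw [truncW_lt _ (by omega)]; exact symb_mem_BInf x (n-1)
    have hokY : WordOK M n (truncW n y.1) := by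
      refine ⟨fun i hi => ?_, ?_, ?_⟩
      · rw [truncW_lt _ (by omega), truncW_lt _ (by omega)]; exact y.2 i
      · rw [truncW_lt _ (by omega)]; exact symb_mem_BInf y 0
      · rw [truncW_lt _ (by omega)]; exact symb_mem_BInf y (n-1)
    set lx : ShiftSpace M := loopPt hprim v n hn (truncW n x.1) with hlx
    set ly : ShiftSpace M := loopPt hprim v n hn (truncW n y.1) with hly
    have hlxc : ∀ j, lx.1 j = wordG hprim v n n (truncW n x.1) (j % L) := by
      intro j; rw [hlx, loopPt_coe hprim v n hn _ hokX]; rfl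
    have hlyc : ∀ j, ly.1 j = wordG hprim v n n (truncW n y.1) (j % L) := by
      intro j; rw [hly, loopPt_coe hprim v n hn _ hokY]; rfl
    -- zone 1 : the Birkhoff part
    have hZ1 : ∀ t, t < k → A' ((shiftMap M)^[t] z) = A' ((shiftMap M)^[t] y) := by
      intro t ht
      apply hloc
      intro j hj
      rw [shift_iter_coe, shift_iter_coe, hz' (j+t) (by omega),
        wordG_eval1 hprim v n a y.1 (by omega)]
    -- zone 2 : the x-head block
    have hZ2 : ∀ s, s < n →
        A' ((shiftMap M)^[k+s] z) = A' ((shiftMap M)^[s] lx) := by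
      intro s hs
      apply hloc
      intro j hj
      rw [shift_iter_coe, shift_iter_coe, hz' (j+(k+s)) (by omega), hlxc (j+s),
        Nat.mod_eq_of_lt (show j+s < L by omega)]
      by_cases c1 : s + j < n
      · rw [wordG_eval1 hprim v n a y.1 (show j+(k+s) < a by omega),
          wordG_eval1 hprim v n n (truncW n x.1) (show j+s < n by omega),
          truncW_lt _ (show j+s < n by omega)]
        have h1 := hxy (j+s)
        rw [show j+s+k = j+(k+s) by omega] at h1
        exact h1.symm
      · by_cases c2 : s + j < n + K₀
        · rw [wordG_eval2 hprim v n a y.1 (show a ≤ j+(k+s) by omega)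
              (show j+(k+s) < a + K₀ by omega),
            wordG_eval2 hprim v n n (truncW n x.1) (show n ≤ j+s by omega)
              (show j+s < n + K₀ by omega),
            truncW_lt _ (show n-1 < n by omega)]
          have h1 := hxy (n-1)
          rw [show n-1+k = a-1 by omega] at h1
          rw [← h1]
          have h2 : j+(k+s) - a + 1 = j+s - n + 1 := by omega
          rw [h2]
        · rw [wordG_eval3 hprim v n a y.1 (show a + K₀ ≤ j+(k+s) by omega)
              (show j+(k+s) < a + n + K₀ by omega),
            wordG_eval3 hprim v n n (truncW n x.1) (show n + K₀ ≤ j+s by omega)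
              (show j+s < n + n + K₀ by omega)]
          have h2 : j+(k+s) - (a + K₀) = j+s - (n + K₀) := by omega
          rw [h2]
    -- zone 3 : first connector, values in F-cylinders
    have hZ3 : ∀ s, s < K₀ → m ≤ A' ((shiftMap M)^[k+n+s] z) := by
      intro s hs
      apply hm
      rw [shift_iter_coe, hz' (0+(k+n+s)) (by omega),
        wordG_eval2 hprim v n a y.1 (show a ≤ 0+(k+n+s) by omega)
          (show 0+(k+n+s) < a + K₀ by omega)]
      have h1 : 0+(k+n+s) - a + 1 = s + 1 := by omega
      rw [h1]
      exact conn_F hprim (symb_mem_BInf y (a-1)) (symb_mem_BInf v 0) (by omega) (by omega)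
    -- zone 4 : the v block, matched against the canonical loop of the y-head
    have hZ4 : ∀ s, s < n →
        A' ((shiftMap M)^[k+n+K₀+s] z) = A' ((shiftMap M)^[n+K₀+s] ly) := by
      intro s hs
      apply hloc
      intro j hj
      rw [shift_iter_coe, shift_iter_coe, hlyc (j+(n+K₀+s))]
      by_cases c1 : s + j < n
      · rw [hz' (j+(k+n+K₀+s)) (by omega),
          wordG_eval3 hprim v n a y.1 (show a + K₀ ≤ j+(k+n+K₀+s) by omega)
            (show j+(k+n+K₀+s) < a + n + K₀ by omega),
          Nat.mod_eq_of_lt (show j+(n+K₀+s) < L by omega),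
          wordG_eval3 hprim v n n (truncW n y.1) (show n + K₀ ≤ j+(n+K₀+s) by omega)
            (show j+(n+K₀+s) < n + n + K₀ by omega)]
        have h2 : j+(k+n+K₀+s) - (a + K₀) = j+(n+K₀+s) - (n + K₀) := by omega
        rw [h2]
      · by_cases c2 : s + j < n + K₀
        · rw [hz' (j+(k+n+K₀+s)) (by omega),
            wordG_eval4 hprim v n a y.1 (show a + n + K₀ ≤ j+(k+n+K₀+s) by omega),
            Nat.mod_eq_of_lt (show j+(n+K₀+s) < L by omega),
            wordG_eval4 hprim v n n (truncW n y.1) (show n + n + K₀ ≤ j+(n+K₀+s) by omega),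
            truncW_lt _ (show (0:ℕ) < n by omega)]
          have h2 : j+(k+n+K₀+s) - (a + n + K₀) + 1 = j+(n+K₀+s) - (n + n + K₀) + 1 := by
            omega
          rw [h2]
        · -- both wrap around
          have hr : s + j - (n + K₀) < n := by omega
          rw [hzcoe (j+(k+n+K₀+s))]
          have hp : j+(k+n+K₀+s) = N + (s + j - (n + K₀)) := by omega
          rw [hp, Nat.add_mod_left, Nat.mod_eq_of_lt (show s + j - (n+K₀) < N by omega),
            wordG_eval1 hprim v n a y.1 (show s + j - (n+K₀) < a by omega)]
          have hq : j+(n+K₀+s) = L + (s + j - (n + K₀)) := by omega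
          rw [hq, Nat.add_mod_left, Nat.mod_eq_of_lt (show s + j - (n+K₀) < L by omega),
            wordG_eval1 hprim v n n (truncW n y.1) (show s + j - (n+K₀) < n by omega),
            truncW_lt _ hr]
    -- zone 5 : second connector
    have hZ5 : ∀ s, s < K₀ → m ≤ A' ((shiftMap M)^[k+2*n+K₀+s] z) := by
      intro s hs
      apply hm
      rw [shift_iter_coe, hz' (0+(k+2*n+K₀+s)) (by omega),
        wordG_eval4 hprim v n a y.1 (show a + n + K₀ ≤ 0+(k+2*n+K₀+s) by omega)]
      have h1 : 0+(k+2*n+K₀+s) - (a + n + K₀) + 1 = s + 1 := by omega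
      rw [h1]
      exact conn_F hprim (symb_mem_BInf v (n-1)) (symb_mem_BInf y 0) (by omega) (by omega)
    -- decompose the total sum
    have hNsplit : N = k + (n + (K₀ + (n + K₀))) := by omega
    have hsplit : ∑ t ∈ Finset.range N, A' ((shiftMap M)^[t] z)
        = (∑ t ∈ Finset.range k, A' ((shiftMap M)^[t] z))
          + ((∑ s ∈ Finset.range n, A' ((shiftMap M)^[k+s] z))
          + ((∑ s ∈ Finset.range K₀, A' ((shiftMap M)^[k+(n+s)] z))
          + ((∑ s ∈ Finset.range n, A' ((shiftMap M)^[k+(n+(K₀+s))] z))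
          + (∑ s ∈ Finset.range K₀, A' ((shiftMap M)^[k+(n+(K₀+(n+s)))] z))))) := by
      rw [hNsplit, Finset.sum_range_add, Finset.sum_range_add, Finset.sum_range_add,
        Finset.sum_range_add]
    have hc1 : ∑ t ∈ Finset.range k, A' ((shiftMap M)^[t] z)
        = ∑ t ∈ Finset.range k, A' ((shiftMap M)^[t] y) :=
      Finset.sum_congr rfl fun t ht => hZ1 t (Finset.mem_range.1 ht)
    have hc2 : ∑ s ∈ Finset.range n, A' ((shiftMap M)^[k+s] z) = E1 x := by
      rw [hE1]
      exact Finset.sum_congr rfl fun s hs => hZ2 s (Finset.mem_range.1 hs)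
    have hc3 : K₀ * m ≤ ∑ s ∈ Finset.range K₀, A' ((shiftMap M)^[k+(n+s)] z) := by
      calc (K₀:ℝ) * m = ∑ _s ∈ Finset.range K₀, m := by
            rw [Finset.sum_const, Finset.card_range, nsmul_eq_mul]
        _ ≤ _ := Finset.sum_le_sum fun s hs => by
            have h1 := hZ3 s (Finset.mem_range.1 hs)
            rw [show k+n+s = k+(n+s) by omega] at h1
            exact h1
    have hc4 : ∑ s ∈ Finset.range n, A' ((shiftMap M)^[k+(n+(K₀+s))] z) = E2 y.1 := by
      rw [hE2]
      refine Finset.sum_congr rfl fun s hs => ?_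
      have h1 := hZ4 s (Finset.mem_range.1 hs)
      rw [show k+n+K₀+s = k+(n+(K₀+s)) by omega] at h1
      exact h1
    have hc5 : K₀ * m ≤ ∑ s ∈ Finset.range K₀, A' ((shiftMap M)^[k+(n+(K₀+(n+s)))] z) := by
      calc (K₀:ℝ) * m = ∑ _s ∈ Finset.range K₀, m := by
            rw [Finset.sum_const, Finset.card_range, nsmul_eq_mul]
        _ ≤ _ := Finset.sum_le_sum fun s hs => by
            have h1 := hZ5 s (Finset.mem_range.1 hs)
            rw [show k+2*n+K₀+s = k+(n+(K₀+(n+s))) by omega] at h1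
            exact h1
    have htot : ∑ t ∈ Finset.range N, A' ((shiftMap M)^[t] z) ≤ N * β := by
      rw [hβ]
      exact sum_le_betaA A' hb z N (by omega) hper
    have hNcast : (N:ℝ) = (k:ℝ) + 2*n + 2*K₀ := by
      rw [hN, ha]; push_cast; ring
    have hmin1 : R y.1 ≤ E2 y.1 := min_le_left _ _
    have hkε : 0 ≤ (k:ℝ) * ε := by positivity
    have hfin : (∑ t ∈ Finset.range k, A' ((shiftMap M)^[t] y)) + E1 x + E2 y.1 + 2*K₀*m
        ≤ (k:ℝ) * β + (2*n + 2*K₀) * β := by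
      have := hsplit ▸ htot
      rw [hc1, hc2, hc4] at this
      have h2 : ((N:ℝ)) * β = (k:ℝ) * β + (2*n + 2*K₀) * β := by rw [hNcast]; ring
      rw [h2] at this
      linarith
    rw [hc]
    linarith
  -- the function f
  set f : ShiftSpace M → ℝ := fun x => sSup (T x) with hf
  have hTne : ∀ x, (T x).Nonempty := by
    intro x
    exact ⟨R x.1, 0, x, rfl, by simp⟩
  have hTbdd : ∀ x, BddAbove (T x) := by
    intro x
    refine ⟨(2*n + 2*K₀) * β - E1 x - 2*K₀*m, ?_⟩
    rintro r ⟨k, y, hy, rfl⟩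
    exact hmaster x k y hy
  -- the sub-action inequality
  have hsubact : ∀ x, A' x + f x - f (shiftMap M x) ≤ c := by
    intro x
    have h1 : ∀ r ∈ T x, r + (A' x - c) ≤ f (shiftMap M x) := by
      rintro r ⟨k, y, hy, rfl⟩
      apply le_csSup (hTbdd (shiftMap M x))
      refine ⟨k+1, y, ?_, ?_⟩
      · rw [Function.iterate_succ_apply', hy]
      · rw [Finset.sum_range_succ, hy]
        push_cast
        ring
    have h2 : f x ≤ f (shiftMap M x) - (A' x - c) :=
      csSup_le (hTne x) (fun r hr => by linarith [h1 r hr])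
    linarith
  -- local constancy
  have hTsub : ∀ x x', Agree M n x x' → T x ⊆ T x' := by
    intro x x' hagree
    rintro r ⟨k, y, hy, rfl⟩
    have hxy : ∀ i, x.1 i = y.1 (i + k) := by
      intro i; rw [← hy, shift_iter_coe]
    set w : ℕ → ℕ := fun j => if j < k then y.1 j else x'.1 (j - k) with hw
    have hwin : InShift M w := by
      intro j
      by_cases c1 : j + 1 < k
      · rw [hw]; simp only
        rw [if_pos (by omega), if_pos c1]
        exact y.2 j
      · by_cases c2 : j + 1 = k
        · rw [hw]; simp only
          rw [if_pos (by omega), if_neg (by omega)]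
          have h1 : x'.1 (j+1-k) = y.1 (j+1) := by
            rw [show j+1-k = 0 by omega, ← hagree 0 (by omega), hxy 0,
              show 0+k = j+1 by omega]
          rw [h1]
          exact y.2 j
        · rw [hw]; simp only
          rw [if_neg (by omega), if_neg (by omega)]
          have h1 : j + 1 - k = (j - k) + 1 := by omega
          rw [h1]
          exact x'.2 (j-k)
    set y' : ShiftSpace M := ⟨w, hwin⟩ with hy'def
    have hy'x : (shiftMap M)^[k] y' = x' := by
      apply Subtype.ext
      funext j
      rw [shift_iter_coe]
      show w (j + k) = x'.1 j
      rw [hw]; simp only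
      rw [if_neg (by omega), show j+k-k = j by omega]
    have hsame : ∀ i, i < n → y.1 i = w i := by
      intro i hi
      rw [hw]; simp only
      split_ifs with hik
      · rfl
      · rw [show y.1 i = y.1 ((i-k)+k) by rw [Nat.sub_add_cancel (by omega : k ≤ i)],
          ← hxy (i-k), hagree (i-k) (by omega)]
    have hsum : ∑ t ∈ Finset.range k, A' ((shiftMap M)^[t] y)
        = ∑ t ∈ Finset.range k, A' ((shiftMap M)^[t] y') := by
      refine Finset.sum_congr rfl fun t ht => ?_
      have htk := Finset.mem_range.1 ht
      apply hloc
      intro j hj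
      rw [shift_iter_coe, shift_iter_coe]
      show y.1 (j + t) = w (j + t)
      rw [hw]; simp only
      split_ifs with hik
      · rfl
      · rw [show y.1 (j+t) = y.1 ((j+t-k)+k) by
            rw [Nat.sub_add_cancel (by omega : k ≤ j+t)],
          ← hxy (j+t-k), hagree (j+t-k) (by omega)]
    have hRR : R y.1 = R y'.1 := by
      apply hRdep
      intro i hi
      exact hsame i hi
    exact ⟨k, y', hy'x, by rw [← hsum, ← hRR]⟩
  have hagree_symm : ∀ x x' : ShiftSpace M, Agree M n x x' → Agree M n x' x := by
    intro x x' h j hj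
    exact (h j hj).symm
  have hfloc : ∀ x x', Agree M n x x' → f x = f x' := by
    intro x x' hagree
    rw [hf]
    simp only
    rw [Set.Subset.antisymm (hTsub x x' hagree) (hTsub x' x (hagree_symm x x' hagree))]
  exact ⟨f, continuous_of_locConst n f hfloc, fun x => by
    have := hsubact x
    rw [hc] at this
    exact this⟩

end BetaDualAux

open BetaDualAux

/-- For a primitive countable Markov shift and a uniformly continuous,
bounded above potential `A` with `inf A|_{⋃_{i∈F}[i]} > -∞`, the dual formula
`β_A = inf_{f ∈ C⁰(Σ)} sup_{x ∈ Σ} (A + f - f∘σ)(x)` holds (the value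
`inf_f sup_x (A + f - f∘σ)` being expressed as the infimum of all constants `c` that,
for some continuous `f`, bound `A + f - f∘σ` from above). -/
theorem betaA_dual_formula
    (M : ℕ → ℕ → Bool) (F : Set ℕ) (K₀ : ℕ)
    (hprim : Primitive M F K₀)
    (A : ShiftSpace M → ℝ)
    (hucont : ∀ ε : ℝ, 0 < ε → ∃ k : ℕ, ∀ x y : ShiftSpace M, Agree M k x y → |A x - A y| ≤ ε)
    (hbdd : BddAbove (Set.range A))
    (hbelow : BddBelow (A '' FCyl M F)) :
    betaA M A = sInf {c : ℝ | ∃ f : ShiftSpace M → ℝ, Continuous f ∧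
      ∀ x : ShiftSpace M, A x + f x - f (shiftMap M x) ≤ c} := by
  classical
  set T : Set ℝ := {c : ℝ | ∃ f : ShiftSpace M → ℝ, Continuous f ∧
    ∀ x : ShiftSpace M, A x + f x - f (shiftMap M x) ≤ c} with hT
  set S : Set ℝ := {r | ∃ μ : MeasureTheory.Measure (ShiftSpace M),
    InvProb M μ ∧ MeasureTheory.Integrable A μ ∧ ∫ x, A x ∂μ = r} with hS
  have hbeta : betaA M A = sSup S := rfl
  by_cases hne : Nonempty (ShiftSpace M)
  · -- main case
    obtain ⟨v⟩ := hne
    have hAcont : Continuous A := continuous_of_ucont A hucont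
    have hAmeas : Measurable A := hAcont.measurable
    -- a canonical periodic point
    set h0 : ℕ → ℕ := fun _ => v.1 0 with hh0
    have hok0 : WordOK M 1 h0 :=
      ⟨fun i hi => absurd hi (by omega), symb_mem_BInf v 0, symb_mem_BInf v 0⟩
    set z₀ : ShiftSpace M := loopPt hprim v 1 le_rfl h0 with hz₀
    set N₀ : ℕ := 1 + 1 + 2*K₀ with hN₀
    have hper0 : (shiftMap M)^[N₀] z₀ = z₀ :=
      perFun_periodic z₀ (wordG hprim v 1 1 h0) N₀ (by omega)
        (by rw [hz₀, loopPt_coe hprim v 1 le_rfl h0 hok0])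
    have hinv0 : InvProb M (perMeas M z₀ N₀) := perMeas_invProb z₀ N₀ (by omega) hper0
    have hSne : S.Nonempty :=
      ⟨∫ x, A x ∂(perMeas M z₀ N₀), perMeas M z₀ N₀, hinv0,
        integrable_perMeas A z₀ N₀ (by omega), rfl⟩
    have hSbdd : BddAbove S := by
      refine ⟨sSup (Set.range A), ?_⟩
      rintro r ⟨μ, hμ, hAi, rfl⟩
      haveI := hμ.1
      calc ∫ x, A x ∂μ ≤ ∫ _, sSup (Set.range A) ∂μ :=
            MeasureTheory.integral_mono hAi (MeasureTheory.integrable_const _)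
              (fun x => le_csSup hbdd ⟨x, rfl⟩)
        _ = sSup (Set.range A) := by simp
    have hdir1 : ∀ c ∈ T, ∀ r ∈ S, r ≤ c := by
      rintro c ⟨f, hf, hsub⟩ r ⟨μ, hμ, hAi, rfl⟩
      exact integral_le_subaction μ hμ A hAmeas hAi hbdd f hf c hsub
    have hTne : T.Nonempty :=
      ⟨sSup (Set.range A), (fun _ => 0), continuous_const,
        fun x => by simpa using le_csSup hbdd ⟨x, rfl⟩⟩
    obtain ⟨r₀, hr₀⟩ := hSne
    have hTbdd : BddBelow T := ⟨r₀, fun c hc => hdir1 c hc r₀ hr₀⟩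
    have hle : betaA M A ≤ sInf T := by
      rw [hbeta]
      exact le_csInf hTne fun c hc => csSup_le ⟨r₀, hr₀⟩ fun r hr => hdir1 c hc r hr
    have hge : ∀ ε : ℝ, 0 < ε → sInf T ≤ betaA M A + ε := by
      intro ε hε
      obtain ⟨k₁, hk₁⟩ := hucont (ε/4) (by linarith)
      set n : ℕ := max k₁ 1 with hn
      have hn1 : 1 ≤ n := le_max_right _ _
      have hk : ∀ x y : ShiftSpace M, Agree M n x y → |A x - A y| ≤ ε/4 := by
        intro x y hxy
        exact hk₁ x y fun j hj => hxy j (lt_of_lt_of_le hj (le_max_left _ _))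
      set A' : ShiftSpace M → ℝ := fun x => sSup (A '' {y | Agree M n x y}) with hA'
      have himgne : ∀ x : ShiftSpace M, (A '' {y | Agree M n x y}).Nonempty :=
        fun x => ⟨A x, x, agree_refl n x, rfl⟩
      have himgbdd : ∀ x : ShiftSpace M, BddAbove (A '' {y | Agree M n x y}) :=
        fun x => hbdd.mono (Set.image_subset_range A _)
      have hA'ge : ∀ x, A x ≤ A' x := fun x => le_csSup (himgbdd x) ⟨x, agree_refl n x, rfl⟩
      have hA'le : ∀ x, A' x ≤ A x + ε/4 := by
        intro x
        apply csSup_le (himgne x)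
        rintro r ⟨y, hy, rfl⟩
        have h1 := hk x y hy
        have h2 := abs_le.1 h1
        linarith [h2.1]
      have hsetEq : ∀ x y : ShiftSpace M, Agree M n x y →
          {w : ShiftSpace M | Agree M n x w} = {w : ShiftSpace M | Agree M n y w} := by
        intro x y hxy
        ext w
        constructor
        · intro hw j hj
          rw [← hxy j hj]; exact hw j hj
        · intro hw j hj
          rw [hxy j hj]; exact hw j hj
      have hA'loc : ∀ x y, Agree M n x y → A' x = A' y := by
        intro x y hxy
        rw [hA']
        simp only
        rw [hsetEq x y hxy]
      have hA'bdd : BddAbove (Set.range A') := by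
        refine ⟨sSup (Set.range A) + ε/4, ?_⟩
        rintro r ⟨x, rfl⟩
        have h1 := hA'le x
        have h2 : A x ≤ sSup (Set.range A) := le_csSup hbdd ⟨x, rfl⟩
        linarith
      obtain ⟨mF, hmF⟩ := hbelow
      have hm' : ∀ w : ShiftSpace M, w.1 0 ∈ F → mF ≤ A' w := by
        intro w hw
        have h1 : mF ≤ A w := hmF ⟨w, hw, rfl⟩
        linarith [hA'ge w]
      -- betaA M A' ≤ betaA M A + ε/4
      have hβ' : betaA M A' ≤ betaA M A + ε/4 := by
        have hrfl : betaA M A' = sSup {r | ∃ μ : MeasureTheory.Measure (ShiftSpace M),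
          InvProb M μ ∧ MeasureTheory.Integrable A' μ ∧ ∫ x, A' x ∂μ = r} := rfl
        rw [hrfl]
        apply csSup_le
        · exact ⟨∫ x, A' x ∂(perMeas M z₀ N₀), perMeas M z₀ N₀, hinv0,
            integrable_perMeas A' z₀ N₀ (by omega), rfl⟩
        · rintro r ⟨μ, hμ, hA'i, rfl⟩
          haveI := hμ.1
          have hAi : MeasureTheory.Integrable A μ := by
            apply MeasureTheory.Integrable.mono'
              (g := fun x => |A' x| + ε/4) (hA'i.abs.add (MeasureTheory.integrable_const _))
              hAmeas.aestronglyMeasurable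
            apply Filter.Eventually.of_forall
            intro x
            have h1 := hA'ge x
            have h2 := hA'le x
            rw [Real.norm_eq_abs, abs_le]
            constructor
            · have h3 : -|A' x| ≤ A' x := neg_abs_le _
              linarith
            · have h3 : A' x ≤ |A' x| := le_abs_self _
              linarith
          have h1 : ∫ x, A' x ∂μ ≤ (∫ x, A x ∂μ) + ε/4 := by
            calc ∫ x, A' x ∂μ ≤ ∫ x, (A x + ε/4) ∂μ :=
                  MeasureTheory.integral_mono hA'i
                    (hAi.add (MeasureTheory.integrable_const _)) hA'le
              _ = (∫ x, A x ∂μ) + ε/4 := by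
                  rw [MeasureTheory.integral_add hAi (MeasureTheory.integrable_const _)]
                  simp
          have h2 : ∫ x, A x ∂μ ≤ betaA M A := by
            rw [hbeta]
            exact le_csSup hSbdd ⟨μ, hμ, hAi, rfl⟩
          linarith
      obtain ⟨f, hfc, hfsub⟩ :=
        exists_subaction hprim v A' n hn1 hA'loc hA'bdd mF hm' (ε/4) (by linarith)
      have hmem : (betaA M A' + ε/4) ∈ T := by
        refine ⟨f, hfc, fun x => ?_⟩
        have h1 := hfsub x
        have h2 := hA'ge x
        linarith
      calc sInf T ≤ betaA M A' + ε/4 := csInf_le hTbdd hmem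
        _ ≤ betaA M A + ε := by linarith
    exact le_antisymm hle (le_of_forall_pos_le_add hge)
  · -- empty shift space
    rw [not_nonempty_iff] at hne
    have hSempty : S = ∅ := by
      ext r
      simp only [hS, Set.mem_setOf_eq, Set.mem_empty_iff_false, iff_false]
      rintro ⟨μ, hμ, _, _⟩
      haveI := hμ.1
      have h0 : μ Set.univ = 0 := by
        rw [Set.univ_eq_empty_iff.2 hne]
        exact MeasureTheory.measure_empty
      rw [MeasureTheory.measure_univ] at h0
      exact one_ne_zero h0
    have hTuniv : T = Set.univ := by
      apply Set.eq_univ_of_forall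
      intro c
      exact ⟨fun _ => 0, continuous_const, fun x => (hne.false x).elim⟩
    have hTnb : ¬ BddBelow T := by
      rintro ⟨b, hb⟩
      have h1 : b - 1 ∈ T := by rw [hTuniv]; trivial
      have h2 := hb h1
      linarith
    rw [hbeta, hSempty, Real.sSup_empty, Real.sInf_of_not_bddBelow hTnb]
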